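/- For propositional formulas φ over variables X ∩ Y = ∅ and ψ over Y, and a fresh variable z: φ is satisfiable and ψ is unsatisfiable if and only if {z} is a minimal model of ∃X∃Y (φ ∧ (z ∨ ψ)). -/

import Mathlib

/-! ### Machine model: deterministic single-tape Turing machines,
with explicit time and space usage. -/

structure STM (σ : Type) where
  Q : Type
  qFin : Fintype Q
  init : Q
  /-- Transition function: `none` means halt; otherwise
  (new state, written symbol (`none` = blank), move-right?). -/
  δ : Q → Option σ → Option (Q × Option σ × Bool)

namespace STM

variable {σ : Type}

structure Cfg (M : STM σ) where
  q : M.Q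
  head : ℕ
  tape : ℕ → Option σ

def initCfg (M : STM σ) (x : List σ) : M.Cfg :=
  ⟨M.init, 0, fun i => x[i]?⟩

def step (M : STM σ) (c : M.Cfg) : Option M.Cfg :=
  (M.δ c.q (c.tape c.head)).map fun t =>
    ⟨t.1, if t.2.2 then c.head + 1 else c.head - 1,
      fun i => if i = c.head then t.2.1 else c.tape i⟩

def step1 (M : STM σ) (c : M.Cfg) : M.Cfg := (M.step c).getD c

def run (M : STM σ) (n : ℕ) (c : M.Cfg) : M.Cfg := M.step1^[n] c

def Halted (M : STM σ) (c : M.Cfg) : Prop := M.step c = none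

/-- The tape holds exactly the string `l`, followed by blanks. -/
def Represents (t : ℕ → Option σ) (l : List σ) : Prop := ∀ i, t i = l[i]?

/-- `M` computes `f` within time bound `T` (with respect to injections of the
input and output alphabets into the tape alphabet). -/
def ComputesInTime {α β : Type} (M : STM σ) (ια : α → σ) (ιβ : β → σ)
    (f : List α → List β) (T : ℕ → ℕ) : Prop :=
  ∀ x : List α, ∃ n, n ≤ T x.length ∧
    M.Halted (M.run n (M.initCfg (x.map ια))) ∧
    Represents (M.run n (M.initCfg (x.map ια))).tape ((f x).map ιβ)

/-- `M` computes `f` within space bound `S`: the computation halts with the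
correct output and the head never leaves the first `S |x|` cells. -/
def ComputesInSpace {α β : Type} (M : STM σ) (ια : α → σ) (ιβ : β → σ)
    (f : List α → List β) (S : ℕ → ℕ) : Prop :=
  ∀ x : List α, ∃ n,
    M.Halted (M.run n (M.initCfg (x.map ια))) ∧
    Represents (M.run n (M.initCfg (x.map ια))).tape ((f x).map ιβ) ∧
    ∀ m, m ≤ n → (M.run m (M.initCfg (x.map ια))).head ≤ S x.length

end STM

/-- `f` is computable in polynomial time (by a deterministic Turing machine with
some finite tape alphabet). -/
def PolyTimeFun {α β : Type} (f : List α → List β) : Prop :=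
  ∃ (σ : Type) (_ : Fintype σ) (ια : α → σ) (ιβ : β → σ) (M : STM σ) (p : Polynomial ℕ),
    Function.Injective ια ∧ Function.Injective ιβ ∧
    M.ComputesInTime ια ιβ f (fun n => p.eval n)

/-- `f` is computable in polynomial space. -/
def PolySpaceFun {α β : Type} (f : List α → List β) : Prop :=
  ∃ (σ : Type) (_ : Fintype σ) (ια : α → σ) (ιβ : β → σ) (M : STM σ) (p : Polynomial ℕ),
    Function.Injective ια ∧ Function.Injective ιβ ∧
    M.ComputesInSpace ια ιβ f (fun n => p.eval n)

/-- Standard encoding of a pair of strings over a combined alphabet. -/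
def encodePair {α β : Type} (x : List α) (y : List β) : List (α ⊕ β) :=
  x.map Sum.inl ++ y.map Sum.inr

/-- A two-argument function is polynomial-time computable if the corresponding
function on encoded pairs is. -/
def PolyTimeFun₂ {α β γ : Type} (g : List α → List β → List γ) : Prop :=
  ∃ g' : List (α ⊕ β) → List γ, PolyTimeFun g' ∧ ∀ x y, g' (encodePair x y) = g x y

/-- A language is polynomial-time decidable. -/
def PolyTimeDecidable {α : Type} (L : Set (List α)) : Prop :=
  ∃ f : List α → List Bool, PolyTimeFun f ∧ ∀ x, x ∈ L ↔ f x = [true]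

/-- `L` is in NP: membership has polynomial-size certificates verifiable in
polynomial time. -/
def InNP {α : Type} (L : Set (List α)) : Prop :=
  ∃ (p : Polynomial ℕ) (V : Set (List (α ⊕ Bool))), PolyTimeDecidable V ∧
    ∀ x, x ∈ L ↔ ∃ w : List Bool, w.length ≤ p.eval x.length ∧ encodePair x w ∈ V

def InCoNP {α : Type} (L : Set (List α)) : Prop := InNP Lᶜ

/-- Polynomial-time many-one reducibility of languages. -/
def ManyOneRed {α β : Type} (L₁ : Set (List α)) (L₂ : Set (List β)) : Prop :=
  ∃ f : List α → List β, PolyTimeFun f ∧ ∀ x, x ∈ L₁ ↔ f x ∈ L₂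

def NPComplete {α : Type} (L : Set (List α)) : Prop :=
  InNP L ∧ ∀ (β : Type) (L' : Set (List β)), InNP L' → ManyOneRed L' L

def CoNPComplete {α : Type} (L : Set (List α)) : Prop :=
  InCoNP L ∧ ∀ (β : Type) (L' : Set (List β)), InCoNP L' → ManyOneRed L' L

def NPneqCoNP : Prop := ¬ ∀ (α : Type) (L : Set (List α)), InNP L ↔ InCoNP L

/-- `L` is in coNP/poly: a coNP predicate together with polynomial-size advice
depending only on the input length decides `L`. -/
def InCoNPpoly {α : Type} (L : Set (List α)) : Prop :=
  ∃ (p : Polynomial ℕ) (adv : ℕ → List Bool) (V : Set (List (α ⊕ Bool))),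
    InCoNP V ∧ (∀ n, (adv n).length ≤ p.eval n) ∧
    ∀ x, x ∈ L ↔ encodePair x (adv x.length) ∈ V

def NPnotSubCoNPpoly : Prop := ¬ ∀ (α : Type) (L : Set (List α)), InNP L → InCoNPpoly L

/-! ### Logic systems and model-equivalent reductions -/

/-- A logic system `(Γ, Δ, T, S, R)` (Definition 1): theories are strings over
`Γ`, interpretations are strings over `Δ`, and `R` is the satisfaction
relation. -/
structure LogicSystem (Γ Δ : Type) where
  T : Set (List Γ)
  S : Set (List Δ)
  R : List Γ → List Δ → Prop

namespace LogicSystem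

variable {Γ Δ : Type}

/-- The set of `R`-models of a theory `t`. -/
def Mod (L : LogicSystem Γ Δ) (t : List Γ) : Set (List Δ) := {w | w ∈ L.S ∧ L.R t w}

/-- A poly-size system: `R t w` implies `|w| = p (|t|)` for a fixed polynomial. -/
def PolySize (L : LogicSystem Γ Δ) : Prop :=
  ∃ p : Polynomial ℕ, ∀ t w, L.R t w → w.length = p.eval t.length

/-- The satisfaction relation `R`, as a language of encoded pairs. -/
def RelLang (L : LogicSystem Γ Δ) : Set (List (Γ ⊕ Δ)) :=
  {l | ∃ t w, l = encodePair t w ∧ L.R t w}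

/-- The model-checking problem: given a theory `t ∈ T` and an interpretation
`w ∈ S`, does `w` satisfy `t`? -/
def ModelCheckLang (L : LogicSystem Γ Δ) : Set (List (Γ ⊕ Δ)) :=
  {l | ∃ t w, l = encodePair t w ∧ t ∈ L.T ∧ w ∈ L.S ∧ L.R t w}

/-- The model-existence problem: `{t ∈ T : Mod_R(t) ≠ ∅}`. -/
def ModelExistLang (L : LogicSystem Γ Δ) : Set (List Γ) :=
  {t | t ∈ L.T ∧ (L.Mod t).Nonempty}

end LogicSystem

/-- Poly-time model-equivalent reduction (Definition 2): a poly-time translation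
`f` of theories, and a poly-time map `g` such that `g t` is a bijection from the
models of `t` onto the models of `f t`. -/
def PtimeModelEquivRed {Γ₁ Δ₁ Γ₂ Δ₂ : Type}
    (L₁ : LogicSystem Γ₁ Δ₁) (L₂ : LogicSystem Γ₂ Δ₂) : Prop :=
  ∃ (f : List Γ₁ → List Γ₂) (g : List Γ₁ → List Δ₁ → List Δ₂),
    PolyTimeFun f ∧ PolyTimeFun₂ g ∧
    ∀ t ∈ L₁.T, f t ∈ L₂.T ∧ Set.BijOn (g t) (L₁.Mod t) (L₂.Mod (f t))

/-- Poly-space model-equivalent reduction: as above, but `f` need only be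
computable in polynomial space. -/
def PspaceModelEquivRed {Γ₁ Δ₁ Γ₂ Δ₂ : Type}
    (L₁ : LogicSystem Γ₁ Δ₁) (L₂ : LogicSystem Γ₂ Δ₂) : Prop :=
  ∃ (f : List Γ₁ → List Γ₂) (g : List Γ₁ → List Δ₁ → List Δ₂),
    PolySpaceFun f ∧ PolyTimeFun₂ g ∧
    ∀ t ∈ L₁.T, f t ∈ L₂.T ∧ Set.BijOn (g t) (L₁.Mod t) (L₂.Mod (f t))

/-! ### Propositional formulas and existentially quantified propositional formulas -/

inductive PropForm where
  | tru : PropForm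
  | fls : PropForm
  | var (n : ℕ) : PropForm
  | neg (φ : PropForm) : PropForm
  | and (φ ψ : PropForm) : PropForm
  | or (φ ψ : PropForm) : PropForm
  deriving DecidableEq

namespace PropForm

def eval (v : ℕ → Bool) : PropForm → Bool
  | tru => true
  | fls => false
  | var n => v n
  | neg φ => !(eval v φ)
  | and φ ψ => eval v φ && eval v ψ
  | or φ ψ => eval v φ || eval v ψ

def vars : PropForm → Finset ℕ
  | tru => ∅
  | fls => ∅
  | var n => {n}
  | neg φ => vars φ
  | and φ ψ => vars φ ∪ vars ψ
  | or φ ψ => vars φ ∪ vars ψ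

def iff (φ ψ : PropForm) : PropForm := or (and φ ψ) (and (neg φ) (neg ψ))

def conj : List PropForm → PropForm
  | [] => tru
  | φ :: l => and φ (conj l)

def disj : List PropForm → PropForm
  | [] => fls
  | φ :: l => or φ (disj l)

/-- A formula is satisfiable if some assignment makes it true. -/
def Satisfiable (φ : PropForm) : Prop := ∃ v : ℕ → Bool, φ.eval v = true

/-- A model of `φ`, viewed as the set of variables assigned `true`. -/
def IsModel (φ : PropForm) (M : Finset ℕ) : Prop :=
  M ⊆ φ.vars ∧ φ.eval (fun i => decide (i ∈ M)) = true

/-- A minimal model: no proper subset is a model. -/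
def IsMinModel (φ : PropForm) (M : Finset ℕ) : Prop :=
  φ.IsModel M ∧ ∀ M', M' ⊂ M → ¬ φ.IsModel M'

end PropForm

/-- An existentially quantified propositional formula `∃ bound, matrix`
(free variables allowed). -/
structure EPF where
  bound : Finset ℕ
  matrix : PropForm

namespace EPF

def free (Φ : EPF) : Finset ℕ := Φ.matrix.vars \ Φ.bound

/-- Satisfaction of `Φ` by an assignment of its free variables. -/
def Sat (Φ : EPF) (v : ℕ → Bool) : Prop :=
  ∃ u : ℕ → Bool, (∀ i ∈ Φ.free, u i = v i) ∧ Φ.matrix.eval u = true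

/-- A model of `Φ`: a subset of the free variables whose characteristic
assignment satisfies `Φ`. -/
def IsModel (Φ : EPF) (M : Finset ℕ) : Prop :=
  M ⊆ Φ.free ∧ Φ.Sat (fun i => decide (i ∈ M))

def IsMinModel (Φ : EPF) (M : Finset ℕ) : Prop :=
  Φ.IsModel M ∧ ∀ M', M' ⊂ M → ¬ Φ.IsModel M'

end EPF

/-! ### String encodings of formulas, assignments, and the concrete systems -/

inductive PFAlpha where
  | x | bar | lnot | land | lor | exq | lp | rp | top | bot
  deriving DecidableEq

instance : Fintype PFAlpha :=
  ⟨{.x, .bar, .lnot, .land, .lor, .exq, .lp, .rp, .top, .bot}, by intro a; cases a <;> simp⟩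

def encodeVar (n : ℕ) : List PFAlpha := PFAlpha.x :: List.replicate (n + 1) PFAlpha.bar

def PropForm.encode : PropForm → List PFAlpha
  | .tru => [.top]
  | .fls => [.bot]
  | .var n => encodeVar n
  | .neg φ => .lnot :: φ.encode
  | .and φ ψ => .lp :: (φ.encode ++ .land :: (ψ.encode ++ [.rp]))
  | .or φ ψ => .lp :: (φ.encode ++ .lor :: (ψ.encode ++ [.rp]))

def EPF.encode (Φ : EPF) : List PFAlpha :=
  ((Φ.bound.sort (· ≤ ·)).map fun i => PFAlpha.exq :: encodeVar i).flatten ++ Φ.matrix.encode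

/-- Decode a `{0,1}`-string as a subset of a (sorted) finite set of variables. -/
def decodeM (F : Finset ℕ) (w : List Bool) : Finset ℕ :=
  ((((F.sort (· ≤ ·)).zip w).filter fun p => p.2).map fun p => p.1).toFinset

def SatRel (t : List PFAlpha) (w : List Bool) : Prop :=
  ∃ φ : PropForm, t = φ.encode ∧ w.length = φ.vars.card ∧ φ.IsModel (decodeM φ.vars w)

def MinSatRel (t : List PFAlpha) (w : List Bool) : Prop :=
  ∃ φ : PropForm, t = φ.encode ∧ w.length = φ.vars.card ∧ φ.IsMinModel (decodeM φ.vars w)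

def FSatRel (t : List PFAlpha) (w : List Bool) : Prop :=
  ∃ Φ : EPF, t = Φ.encode ∧ w.length = Φ.free.card ∧ Φ.IsModel (decodeM Φ.free w)

def FMinSatRel (t : List PFAlpha) (w : List Bool) : Prop :=
  ∃ Φ : EPF, t = Φ.encode ∧ w.length = Φ.free.card ∧ Φ.IsMinModel (decodeM Φ.free w)

/-- The system (PF, TA, Sat). -/
def SysSat : LogicSystem PFAlpha Bool :=
  ⟨{t | ∃ φ : PropForm, t = φ.encode}, Set.univ, SatRel⟩

/-- The system (PF, TA, MinSat). -/
def SysMinSat : LogicSystem PFAlpha Bool :=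
  ⟨{t | ∃ φ : PropForm, t = φ.encode}, Set.univ, MinSatRel⟩

/-- The system (∃PF, TA, FSat). -/
def SysFSat : LogicSystem PFAlpha Bool :=
  ⟨{t | ∃ Φ : EPF, t = Φ.encode}, Set.univ, FSatRel⟩

/-- The system (∃PF, TA, FMinSat). -/
def SysFMinSat : LogicSystem PFAlpha Bool :=
  ⟨{t | ∃ Φ : EPF, t = Φ.encode}, Set.univ, FMinSatRel⟩

theorem PropForm.eval_congr (φ : PropForm) (u v : ℕ → Bool)
    (h : ∀ i ∈ φ.vars, u i = v i) : φ.eval u = φ.eval v := by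
  induction φ with
  | tru => rfl
  | fls => rfl
  | var n => exact h n (by simp [PropForm.vars])
  | neg φ ih => simp [PropForm.eval, ih fun i hi => h i hi]
  | and φ ψ ihφ ihψ =>
      simp only [PropForm.eval]
      rw [ihφ fun i hi => h i (by simp [PropForm.vars, hi]),
        ihψ fun i hi => h i (by simp [PropForm.vars, hi])]
  | or φ ψ ihφ ihψ =>
      simp only [PropForm.eval]
      rw [ihφ fun i hi => h i (by simp [PropForm.vars, hi]),
        ihψ fun i hi => h i (by simp [PropForm.vars, hi])]

/-- For `φ` over `X`, `ψ` over `Y` with `X ∩ Y = ∅` and a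
fresh variable `z`: `φ` is satisfiable and `ψ` is unsatisfiable iff `{z}` is a
minimal model of `∃X∃Y (φ ∧ (z ∨ ψ))`. -/
theorem sat_unsat_iff_min_model
    (φ ψ : PropForm) (z : ℕ)
    (hdisj : Disjoint φ.vars ψ.vars) (hz : z ∉ φ.vars ∪ ψ.vars) :
    (φ.Satisfiable ∧ ¬ ψ.Satisfiable) ↔
      (EPF.mk (φ.vars ∪ ψ.vars) (φ.and ((PropForm.var z).or ψ))).IsMinModel {z} := by
  set Φ : EPF := EPF.mk (φ.vars ∪ ψ.vars) (φ.and ((PropForm.var z).or ψ)) with hΦ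
  simp only [Finset.mem_union, not_or] at hz
  obtain ⟨hzφ, hzψ⟩ := hz
  have hfree : Φ.free = {z} := by
    ext i
    simp only [EPF.free, hΦ, PropForm.vars, Finset.mem_sdiff, Finset.mem_union,
      Finset.mem_singleton]
    constructor
    · rintro ⟨h1 | (h1 | h1), h2⟩ <;> tauto
    · rintro rfl; tauto
  have hmodz : Φ.IsModel {z} ↔ φ.Satisfiable := by
    constructor
    · rintro ⟨-, u, hu, heval⟩
      exact ⟨u, (by simpa [hΦ, PropForm.eval] using heval : _ ∧ _).1⟩
    · rintro ⟨v, hv⟩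
      refine ⟨le_of_eq hfree.symm, Function.update v z true, ?_, ?_⟩
      · intro i hi
        rw [hfree] at hi
        simp only [Finset.mem_singleton] at hi
        subst hi
        simp
      · have : φ.eval (Function.update v z true) = true := by
          rw [φ.eval_congr _ v (fun i hi => Function.update_of_ne (by rintro rfl; exact hzφ hi) _ _)]
          exact hv
        simp [hΦ, PropForm.eval, this]
  have hmode : Φ.IsModel ∅ ↔ (φ.Satisfiable ∧ ψ.Satisfiable) := by
    constructor
    · rintro ⟨-, u, hu, heval⟩
      have huz : u z = false := by
        have := hu z (by rw [hfree]; simp)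
        simpa using this
      simp only [hΦ, PropForm.eval, Bool.and_eq_true, Bool.or_eq_true, huz] at heval
      obtain ⟨h1, h2⟩ := heval
      simp at h2
      exact ⟨⟨u, h1⟩, ⟨u, h2⟩⟩
    · rintro ⟨⟨v, hv⟩, ⟨w, hw⟩⟩
      set u : ℕ → Bool := fun i => if i ∈ φ.vars then v i else if i ∈ ψ.vars then w i else false
        with hu
      refine ⟨Finset.empty_subset _, u, ?_, ?_⟩
      · intro i hi
        rw [hfree] at hi
        simp only [Finset.mem_singleton] at hi
        subst hi
        simp [hu, hzφ, hzψ]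
      · have h1 : φ.eval u = true := by
          rw [φ.eval_congr u v (fun i hi => by simp [hu, hi])]; exact hv
        have h2 : ψ.eval u = true := by
          rw [ψ.eval_congr u w (fun i hi => by
            have : i ∉ φ.vars := fun h => (Finset.disjoint_left.mp hdisj h) hi
            simp [hu, hi, this])]
          exact hw
        have huz : u z = false := by simp [hu, hzφ, hzψ]
        simp [hΦ, PropForm.eval, h1, h2]
  constructor
  · rintro ⟨hsat, hunsat⟩
    refine ⟨hmodz.mpr hsat, ?_⟩
    intro M' hM'
    rw [Finset.ssubset_singleton_iff] at hM'
    subst hM'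
    intro hm
    exact hunsat (hmode.mp hm).2
  · rintro ⟨hm, hmin⟩
    have hsat := hmodz.mp hm
    refine ⟨hsat, fun hψ => ?_⟩
    exact hmin ∅ (by simp [Finset.ssubset_singleton_iff]) (hmode.mpr ⟨hsat, hψ⟩)
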